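/- arXiv:2111.06931 — 2 statements merged into one kernel-verified Lean document; each statement's English description precedes it below -/
import Mathlib

section
/- For every integer n ≥ 1, the total quasi projector has the polynomial form Φ_n = Σ_{p=1}^n (−1)^{p−1} · vol_{n−p} · G^p. -/
open Matrix BigOperators Finset
/-- The submatrix of `A` formed by the rows indexed by the subset `S`. -/
def subMat {M N : ℕ} (A : Matrix (Fin M) (Fin N) ℝ) (S : Finset (Fin M)) :
    Matrix {i // i ∈ S} (Fin N) ℝ :=
  A.submatrix (fun i => (i : Fin M)) id

/-- The squared volume `v_S² = det (A_S A_Sᵀ)` of the parallelepiped spanned by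
the rows of `A` indexed by `S`. -/
noncomputable def volSq {M N : ℕ} (A : Matrix (Fin M) (Fin N) ℝ) (S : Finset (Fin M)) : ℝ :=
  (subMat A S * (subMat A S)ᵀ).det

/-- The quasi projector `Q_S = A_Sᵀ · adj(A_S A_Sᵀ) · A_S`. -/
noncomputable def quasiProj {M N : ℕ} (A : Matrix (Fin M) (Fin N) ℝ) (S : Finset (Fin M)) :
    Matrix (Fin N) (Fin N) ℝ :=
  (subMat A S)ᵀ * (subMat A S * (subMat A S)ᵀ).adjugate * subMat A S

/-- The total quasi projector `Φ_n = Σ_{|S| = n} Q_S`. -/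
noncomputable def totalQuasiProj {M N : ℕ} (A : Matrix (Fin M) (Fin N) ℝ) (n : ℕ) :
    Matrix (Fin N) (Fin N) ℝ :=
  ∑ S ∈ Finset.univ.powersetCard n, quasiProj A S

/-- The sum of squared `n`-volumes `vol_n = Σ_{|S| = n} v_S²` (with `vol_0 = 1`). -/
noncomputable def vol {M N : ℕ} (A : Matrix (Fin M) (Fin N) ℝ) (n : ℕ) : ℝ :=
  ∑ S ∈ Finset.univ.powersetCard n, volSq A S


section generic


variable {R : Type*} [CommRing R] {ι : Type*} [DecidableEq ι] [Fintype ι]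

/-- minor of H deleting row and column j -/
def mnr (H : Matrix ι ι R) (j : ι) : Matrix {k : ι // k ≠ j} {k : ι // k ≠ j} R :=
  H.submatrix Subtype.val Subtype.val

def eqv (j : ι) : {k : ι // k ≠ j} ⊕ Unit ≃ ι where
  toFun x := Sum.elim Subtype.val (fun _ => j) x
  invFun k := if h : k = j then Sum.inr () else Sum.inl ⟨k, h⟩
  left_inv x := by
    rcases x with ⟨k, hk⟩ | ⟨⟩
    · simp [hk]
    · simp
  right_inv k := by
    by_cases h : k = j <;> simp [h]

lemma det_updateRow_single_self (H : Matrix ι ι R) (j : ι) :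
    det (H.updateRow j (Pi.single j 1)) = det (mnr H j) := by
  rw [← det_submatrix_equiv_self (eqv j)]
  have : (H.updateRow j (Pi.single j 1)).submatrix (eqv j) (eqv j) =
      fromBlocks (mnr H j) (Matrix.of fun k (_ : Unit) => H k.val j) 0 1 := by
    ext x y
    rcases x with ⟨k, hk⟩ | ⟨⟩
    · rcases y with ⟨l, hl⟩ | ⟨⟩
      · simp [eqv, mnr, fromBlocks, updateRow_apply, hk]
      · simp [eqv, mnr, fromBlocks, updateRow_apply, hk]
    · rcases y with ⟨l, hl⟩ | ⟨⟩
      · simp [eqv, mnr, fromBlocks, updateRow_apply, Pi.single_apply, Ne.symm hl]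
      · simp [eqv, mnr, fromBlocks, updateRow_apply, Pi.single_apply]
  rw [this, det_fromBlocks_zero₂₁, det_one, mul_one]

lemma det_updateRow_single_ne (H : Matrix ι ι R) {i j : ι} (hij : i ≠ j) :
    det (H.updateRow j (Pi.single i 1)) =
      - det ((mnr H j).updateCol ⟨i, hij⟩ (fun k => H k.val j)) := by
  rw [← det_submatrix_equiv_self (eqv j)]
  set X := (H.updateRow j (Pi.single i 1)).submatrix (eqv j) (eqv j) with hX
  set σ : Equiv.Perm ({k : ι // k ≠ j} ⊕ Unit) :=
    Equiv.swap (Sum.inl ⟨i, hij⟩) (Sum.inr ()) with hσ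
  have hdet : (X.submatrix id σ).det = Equiv.Perm.sign σ * X.det := det_permute' σ X
  have hsign : Equiv.Perm.sign σ = -1 := by
    rw [hσ]; exact Equiv.Perm.sign_swap (by simp)
  rw [hsign] at hdet
  have hXσ : X.submatrix id σ =
      fromBlocks ((mnr H j).updateCol ⟨i, hij⟩ (fun k => H k.val j))
        (Matrix.of fun k (_ : Unit) => mnr H j k ⟨i, hij⟩) 0 1 := by
    ext x y
    cases x with
    | inl k =>
      cases y with
      | inl l =>
        by_cases h : l = (⟨i, hij⟩ : {k : ι // k ≠ j})
        · subst h
          simp [hX, hσ, eqv, mnr, fromBlocks, updateRow_apply, updateCol_apply, k.prop]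
        · have hs : σ (Sum.inl l) = Sum.inl l := by
            rw [hσ]; exact Equiv.swap_apply_of_ne_of_ne (by simpa using h) (by simp)
          simp [hX, hs, eqv, mnr, fromBlocks, updateRow_apply, updateCol_apply, k.prop, h]
      | inr u =>
        simp [hX, hσ, eqv, mnr, fromBlocks, updateRow_apply, updateCol_apply, k.prop]
    | inr u =>
      cases y with
      | inl l =>
        by_cases h : l = (⟨i, hij⟩ : {k : ι // k ≠ j})
        · subst h
          simp [hX, hσ, eqv, fromBlocks, Pi.single_apply, Ne.symm hij]
        · have hs : σ (Sum.inl l) = Sum.inl l := by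
            rw [hσ]; exact Equiv.swap_apply_of_ne_of_ne (by simpa using h) (by simp)
          have hli : l.val ≠ i := fun hc => h (Subtype.ext hc)
          simp [hX, hs, eqv, fromBlocks, Pi.single_apply, hli, h]
      | inr v =>
        simp [hX, hσ, eqv, fromBlocks, Pi.single_apply]
  rw [hXσ, det_fromBlocks_zero₂₁, det_one, mul_one] at hdet
  push_cast at hdet
  linear_combination hdet

end generic
noncomputable section
variable {M N : ℕ}

def gramOf {ι : Type*} [Fintype ι] (B : Matrix ι (Fin N) ℝ) : Matrix ι ι ℝ := B * Bᵀ

def qpOf {ι : Type*} [Fintype ι] [DecidableEq ι] (B : Matrix ι (Fin N) ℝ) :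
    Matrix (Fin N) (Fin N) ℝ := Bᵀ * adjugate (gramOf B) * B

lemma gramOf_submatrix {ι ι' : Type*} [Fintype ι] [Fintype ι'] (e : ι' ≃ ι)
    (B : Matrix ι (Fin N) ℝ) : gramOf (B.submatrix e id) = (gramOf B).submatrix e e := by
  ext k m; simp [gramOf, mul_apply]

lemma qpOf_reindex {ι ι' : Type*} [Fintype ι] [Fintype ι'] [DecidableEq ι] [DecidableEq ι']
    (e : ι' ≃ ι) (B : Matrix ι (Fin N) ℝ) : qpOf (B.submatrix e id) = qpOf B := by
  unfold qpOf
  rw [gramOf_submatrix, adjugate_submatrix_equiv_self, transpose_submatrix]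
  rw [submatrix_mul_equiv, submatrix_mul_equiv, submatrix_id_id]

def eraseEquiv {M : ℕ} (S : Finset (Fin M)) {j : Fin M} (hj : j ∈ S) :
    {i // i ∈ S.erase j} ≃ {k : {i // i ∈ S} // k ≠ ⟨j, hj⟩} where
  toFun x := ⟨⟨x.val, Finset.mem_of_mem_erase x.prop⟩,
    fun h => (Finset.mem_erase.mp x.prop).1 (by simpa [Subtype.ext_iff] using h)⟩
  invFun k := ⟨k.val.val, Finset.mem_erase.mpr
    ⟨fun hc => k.prop (Subtype.ext hc), k.val.prop⟩⟩
  left_inv x := Subtype.ext rfl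
  right_inv k := Subtype.ext (Subtype.ext rfl)

def Csub (A : Matrix (Fin M) (Fin N) ℝ) (S : Finset (Fin M)) (l : {i // i ∈ S}) :
    Matrix {k : {i // i ∈ S} // k ≠ l} (Fin N) ℝ :=
  (subMat A S).submatrix Subtype.val id

lemma subMat_erase (A : Matrix (Fin M) (Fin N) ℝ) {S : Finset (Fin M)} {j : Fin M}
    (hj : j ∈ S) :
    subMat A (S.erase j) = (Csub A S ⟨j, hj⟩).submatrix (eraseEquiv S hj) id := by
  ext x p; rfl

lemma gram_Csub (A : Matrix (Fin M) (Fin N) ℝ) (S : Finset (Fin M)) (l : {i // i ∈ S}) :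
    gramOf (Csub A S l) = mnr (gramOf (subMat A S)) l := by
  ext k m; simp [gramOf, mnr, Csub, mul_apply]

lemma quasiProj_eq_qpOf (A : Matrix (Fin M) (Fin N) ℝ) (S : Finset (Fin M)) :
    quasiProj A S = qpOf (subMat A S) := rfl

lemma volSq_eq (A : Matrix (Fin M) (Fin N) ℝ) (S : Finset (Fin M)) :
    volSq A S = det (gramOf (subMat A S)) := rfl

lemma quasiProj_erase (A : Matrix (Fin M) (Fin N) ℝ) {S : Finset (Fin M)} {j : Fin M}
    (hj : j ∈ S) : quasiProj A (S.erase j) = qpOf (Csub A S ⟨j, hj⟩) := by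
  rw [quasiProj_eq_qpOf, subMat_erase A hj, qpOf_reindex]

lemma volSq_erase (A : Matrix (Fin M) (Fin N) ℝ) {S : Finset (Fin M)} {j : Fin M}
    (hj : j ∈ S) : volSq A (S.erase j) = det (mnr (gramOf (subMat A S)) ⟨j, hj⟩) := by
  rw [volSq_eq, subMat_erase A hj, gramOf_submatrix, det_submatrix_equiv_self, gram_Csub]

end


section helpers
variable {l m n : Type*} [Fintype m]

lemma mul_vecMulVec (X : Matrix l m ℝ) (w : m → ℝ) (v : n → ℝ) :
    X * vecMulVec w v = vecMulVec (X *ᵥ w) v := by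
  ext i j
  simp only [mul_apply, vecMulVec_apply, mulVec, dotProduct, Finset.sum_mul, mul_assoc]

lemma smul_vecMulVec (c : ℝ) (w : m → ℝ) (v : n → ℝ) :
    vecMulVec (c • w) v = c • vecMulVec w v := by
  ext i j
  simp [vecMulVec_apply, smul_eq_mul, mul_assoc]
end helpers

def rk1 {M N : ℕ} (A : Matrix (Fin M) (Fin N) ℝ) (j : Fin M) : Matrix (Fin N) (Fin N) ℝ :=
  vecMulVec (A j) (A j)

lemma sum_rk1 {M N : ℕ} (A : Matrix (Fin M) (Fin N) ℝ) :
    ∑ j : Fin M, rk1 A j = Aᵀ * A := by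
  ext p q
  simp [rk1, vecMulVec_apply, mul_apply, transpose_apply, Matrix.sum_apply]


section adjlem
variable {R : Type*} [CommRing R] {ι : Type*} [DecidableEq ι] [Fintype ι]

lemma adj_diag (H : Matrix ι ι R) (j : ι) : adjugate H j j = det (mnr H j) := by
  rw [adjugate_apply, det_updateRow_single_self]

lemma adj_offdiag (H : Matrix ι ι R) {i j : ι} (hij : i ≠ j) :
    adjugate H i j = - (adjugate (mnr H j) *ᵥ (fun k => H k.val j)) ⟨i, hij⟩ := by
  rw [adjugate_apply, det_updateRow_single_ne H hij, ← cramer_apply, cramer_eq_adjugate_mulVec]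

end adjlem

section gramstuff
variable {M N : ℕ}

lemma quasiProj_mul_rk1 (A : Matrix (Fin M) (Fin N) ℝ) {S : Finset (Fin M)} {j : Fin M}
    (hj : j ∈ S) : quasiProj A S * rk1 A j = volSq A S • rk1 A j := by
  set B := subMat A S with hB
  have hAv : B *ᵥ A j = (B * Bᵀ) *ᵥ Pi.single ⟨j, hj⟩ 1 := by
    rw [mulVec_single]
    ext k
    simp [mul_apply, mulVec, dotProduct, subMat, hB]
  have h1 : adjugate (B * Bᵀ) *ᵥ ((B * Bᵀ) *ᵥ Pi.single ⟨j, hj⟩ 1)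
      = volSq A S • ((Pi.single (⟨j, hj⟩ : {i // i ∈ S}) (1:ℝ)) : {i // i ∈ S} → ℝ) := by
    rw [mulVec_mulVec, adjugate_mul, smul_mulVec, one_mulVec]
    rfl
  have key : quasiProj A S *ᵥ A j = volSq A S • A j := by
    show (Bᵀ * adjugate (B * Bᵀ) * B) *ᵥ A j = volSq A S • A j
    rw [show Bᵀ * adjugate (B * Bᵀ) * B = Bᵀ * (adjugate (B * Bᵀ) * B) from
      Matrix.mul_assoc _ _ _]
    rw [← mulVec_mulVec, ← mulVec_mulVec, hAv, h1, mulVec_smul, mulVec_single]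
    ext p
    simp [subMat, hB, transpose_apply, smul_eq_mul]
  rw [rk1, _root_.mul_vecMulVec, key, _root_.smul_vecMulVec]
  try rfl

lemma hCv (A : Matrix (Fin M) (Fin N) ℝ) (S : Finset (Fin M)) (l : {i // i ∈ S}) :
    Csub A S l *ᵥ A l.val = fun m : {k : {i // i ∈ S} // k ≠ l} => gramOf (subMat A S) m.val l := by
  ext m
  simp [Csub, gramOf, mul_apply, mulVec, dotProduct, subMat]

lemma quasiProj_decomp (A : Matrix (Fin M) (Fin N) ℝ) (S : Finset (Fin M)) :
    quasiProj A S = ∑ j ∈ S, (volSq A (S.erase j) • (1 : Matrix (Fin N) (Fin N) ℝ)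
      - quasiProj A (S.erase j)) * rk1 A j := by
  classical
  rw [← Finset.sum_coe_sort S (fun j => (volSq A (S.erase j) • (1 : Matrix (Fin N) (Fin N) ℝ)
      - quasiProj A (S.erase j)) * rk1 A j)]
  have hQ : quasiProj A S = (subMat A S)ᵀ * adjugate (gramOf (subMat A S)) * subMat A S := rfl
  rw [hQ]
  ext p q
  rw [Matrix.sum_apply, mul_apply]
  refine Finset.sum_congr rfl (fun l _ => ?_)
  -- RHS per-l
  rw [volSq_erase A l.prop, quasiProj_erase A l.prop, rk1, _root_.mul_vecMulVec, vecMulVec_apply,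
    sub_mulVec, smul_mulVec, one_mulVec]
  have hqp : qpOf (Csub A S l) *ᵥ A l.val
      = (Csub A S l)ᵀ *ᵥ (adjugate (mnr (gramOf (subMat A S)) l) *ᵥ
        (fun m : {k : {i // i ∈ S} // k ≠ l} => gramOf (subMat A S) m.val l)) := by
    show ((Csub A S l)ᵀ * adjugate (gramOf (Csub A S l)) * Csub A S l) *ᵥ A l.val = _
    rw [← mulVec_mulVec, ← mulVec_mulVec, hCv, gram_Csub]
  rw [hqp]
  -- LHS per-l : split k = l / k ≠ l
  rw [mul_apply, ← Finset.add_sum_erase _ _ (Finset.mem_univ l), adj_diag]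
  rw [Finset.sum_subtype (Finset.univ.erase l)
    (p := fun k => k ≠ l) (fun x => by simp) (fun k => (subMat A S)ᵀ p k *
      adjugate (gramOf (subMat A S)) k l)]
  have hoff : ∀ k' : {k : {i // i ∈ S} // k ≠ l},
      (subMat A S)ᵀ p k'.val * adjugate (gramOf (subMat A S)) k'.val l
      = -((subMat A S)ᵀ p k'.val * ((adjugate (mnr (gramOf (subMat A S)) l)) *ᵥ
          (fun m : {k : {i // i ∈ S} // k ≠ l} => gramOf (subMat A S) m.val l)) k') := by
    intro k'
    rw [adj_offdiag (gramOf (subMat A S)) k'.prop]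
    try ring_nf
    try rfl
  rw [Finset.sum_congr rfl (fun k' _ => hoff k')]
  rw [Finset.sum_neg_distrib]
  -- now both sides are: (Bᵀ p l * det mnr + -(∑ ...)) * B l q  vs  (det mnr • A l - Cᵀ *ᵥ u) p * A l q
  simp only [Pi.sub_apply, Pi.smul_apply, smul_eq_mul, mulVec, dotProduct, transpose_apply,
    Csub, subMat, submatrix_apply, id_eq]
  try ring_nf
  try rfl

end gramstuff


lemma sum_powersetCard_succ_eq {β : Type*} [AddCommMonoid β] {M : ℕ} (n : ℕ)
    (F : Finset (Fin M) → Fin M → β) :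
    ∑ R ∈ Finset.univ.powersetCard (n+1), ∑ j ∈ R, F (R.erase j) j
      = ∑ S ∈ Finset.univ.powersetCard n, ∑ j ∈ Sᶜ, F S j := by
  rw [Finset.sum_sigma' (Finset.univ.powersetCard (n+1)) (fun R => R)
      (fun R j => F (R.erase j) j),
    Finset.sum_sigma' (Finset.univ.powersetCard n) (fun S => Sᶜ) (fun S j => F S j)]
  refine Finset.sum_nbij' (fun x => ⟨x.1.erase x.2, x.2⟩) (fun x => ⟨insert x.2 x.1, x.2⟩)
    ?_ ?_ ?_ ?_ ?_
  · rintro ⟨R, j⟩ hx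
    rw [Finset.mem_sigma] at hx ⊢
    obtain ⟨hR, hj⟩ := hx
    rw [Finset.mem_powersetCard_univ] at hR ⊢
    refine ⟨by rw [Finset.card_erase_of_mem hj, hR]; rfl, ?_⟩
    exact Finset.mem_compl.mpr (Finset.notMem_erase j R)
  · rintro ⟨S, j⟩ hx
    rw [Finset.mem_sigma] at hx ⊢
    obtain ⟨hS, hj⟩ := hx
    rw [Finset.mem_powersetCard_univ] at hS ⊢
    rw [Finset.mem_compl] at hj
    exact ⟨by rw [Finset.card_insert_of_notMem hj, hS], Finset.mem_insert_self j S⟩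
  · rintro ⟨R, j⟩ hx
    rw [Finset.mem_sigma] at hx
    simp [Finset.insert_erase hx.2]
  · rintro ⟨S, j⟩ hx
    rw [Finset.mem_sigma] at hx
    simp [Finset.erase_insert (Finset.mem_compl.mp hx.2)]
  · rintro ⟨R, j⟩ _
    rfl

lemma totalQuasiProj_succ {M N : ℕ} (A : Matrix (Fin M) (Fin N) ℝ) (n : ℕ) :
    totalQuasiProj A (n+1) = vol A n • (Aᵀ * A) - totalQuasiProj A n * (Aᵀ * A) := by
  classical
  calc totalQuasiProj A (n+1)
      = ∑ R ∈ Finset.univ.powersetCard (n+1), ∑ j ∈ R,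
          (volSq A (R.erase j) • (1 : Matrix (Fin N) (Fin N) ℝ)
            - quasiProj A (R.erase j)) * rk1 A j :=
        Finset.sum_congr rfl fun R _ => quasiProj_decomp A R
    _ = ∑ S ∈ Finset.univ.powersetCard n, ∑ j ∈ Sᶜ,
          (volSq A S • (1 : Matrix (Fin N) (Fin N) ℝ) - quasiProj A S) * rk1 A j :=
        sum_powersetCard_succ_eq n
          (fun S j => (volSq A S • (1 : Matrix (Fin N) (Fin N) ℝ) - quasiProj A S) * rk1 A j)
    _ = ∑ S ∈ Finset.univ.powersetCard n, ∑ j : Fin M,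
          (volSq A S • (1 : Matrix (Fin N) (Fin N) ℝ) - quasiProj A S) * rk1 A j := by
        refine Finset.sum_congr rfl fun S _ => ?_
        rw [← Finset.sum_compl_add_sum S
          (fun j => (volSq A S • (1 : Matrix (Fin N) (Fin N) ℝ) - quasiProj A S) * rk1 A j)]
        have hz : ∑ j ∈ S,
            (volSq A S • (1 : Matrix (Fin N) (Fin N) ℝ) - quasiProj A S) * rk1 A j = 0 :=
          Finset.sum_eq_zero fun j hj => by
            rw [sub_mul, quasiProj_mul_rk1 A hj, smul_mul_assoc, one_mul, sub_self]
        rw [hz, add_zero]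
    _ = ∑ S ∈ Finset.univ.powersetCard n,
          (volSq A S • (1 : Matrix (Fin N) (Fin N) ℝ) - quasiProj A S) * (Aᵀ * A) := by
        refine Finset.sum_congr rfl fun S _ => ?_
        rw [← Finset.mul_sum, sum_rk1]
    _ = vol A n • (Aᵀ * A) - totalQuasiProj A n * (Aᵀ * A) := by
        simp only [sub_mul, smul_mul_assoc, one_mul, Finset.sum_sub_distrib]
        rw [vol, totalQuasiProj, Finset.sum_smul, Finset.sum_mul]

lemma totalQuasiProj_zero {M N : ℕ} (A : Matrix (Fin M) (Fin N) ℝ) :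
    totalQuasiProj A 0 = 0 := by
  rw [totalQuasiProj, Finset.powersetCard_zero, Finset.sum_singleton]
  ext p q
  rw [quasiProj, mul_apply]
  simp

lemma vol_zero {M N : ℕ} (A : Matrix (Fin M) (Fin N) ℝ) : vol A 0 = 1 := by
  rw [vol, Finset.powersetCard_zero, Finset.sum_singleton, volSq]
  exact det_isEmpty

/-- Polynomial form of the total quasi projector: for `n ≥ 1`,
`Φ_n = Σ_{p=1}^n (−1)^{p−1} vol_{n−p} G^p`, where `G = AᵀA`. -/
theorem totalQuasiProj_polynomial_form {M N : ℕ} (A : Matrix (Fin M) (Fin N) ℝ)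
    {n : ℕ} (hn : 1 ≤ n) :
    totalQuasiProj A n =
      ∑ p ∈ Finset.Icc 1 n, ((-1 : ℝ) ^ (p - 1) * vol A (n - p)) • (Aᵀ * A) ^ p := by
  classical
  induction n, hn using Nat.le_induction with
  | base =>
    rw [show (1:ℕ) = 0+1 from rfl, totalQuasiProj_succ A 0, totalQuasiProj_zero, vol_zero,
      zero_mul, sub_zero, one_smul, Finset.Icc_self, Finset.sum_singleton]
    norm_num [vol_zero]
  | succ n hn ih =>
    have key : ∀ (m : ℕ) (g : ℕ → Matrix (Fin N) (Fin N) ℝ),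
        ∑ p ∈ Finset.Icc 1 m, g p = ∑ i ∈ Finset.range m, g (1+i) := by
      intro m g
      rw [← Finset.Ico_add_one_right_eq_Icc, Finset.sum_Ico_eq_sum_range]
      simp
    rw [totalQuasiProj_succ A n, ih, key n, key (n+1), Finset.sum_range_succ', Finset.sum_mul]
    have hterm : ∀ i ∈ Finset.range n,
        (((-1:ℝ)^(1+i-1) * vol A (n-(1+i))) • (Aᵀ*A)^(1+i)) * (Aᵀ*A)
          = - (((-1:ℝ)^(1+(i+1)-1) * vol A (n+1-(1+(i+1)))) • (Aᵀ*A)^(1+(i+1))) := by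
      intro i _
      rw [smul_mul_assoc, ← pow_succ, ← neg_smul]
      have h1 : 1+i-1 = i := by omega
      have h2 : n-(1+i) = n+1-(1+(i+1)) := by omega
      have h3 : 1+i+1 = 1+(i+1) := by omega
      have h4 : 1+(i+1)-1 = i+1 := by omega
      rw [h1, h2, h3, h4]
      congr 1
      rw [pow_succ]
      ring
    rw [Finset.sum_congr rfl hterm, Finset.sum_neg_distrib, sub_neg_eq_add, add_comm]
    congr 1
    norm_num
end

section
/- Suppose vol_n > 0 and let μ ∈ ℝ with 0 ≤ μ ≤ vol_n be such that xᵀ Φ_n x ≥ μ‖x‖² for all x ∈ ℝ^N. Then for every e₀ ∈ ℝ^N and every k ≥ 0, the expected squared error after k independent volume-sampled steps of the n-row pursuit satisfies Σ_{(S_1,…,S_k)} (Π_{j=1}^k v_{S_j}²/vol_n) · ‖R_{S_k} ⋯ R_{S_1} e₀‖² ≤ (1 − μ/vol_n)^k · ‖e₀‖², where the sum ranges over all k-tuples of n-element subsets of {1,…,M}. -/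
open Matrix BigOperators Finset

/-- Squared Euclidean norm of a vector in `ℝ^N`. -/
def normSq {N : ℕ} (x : Fin N → ℝ) : ℝ := ∑ i, x i ^ 2

/-- The rejection operator `R_S = I − Q_S / v_S²` when `v_S² ≠ 0`
(equal to `I − P_S` for linearly independent rows), and `R_S = I` otherwise. -/
noncomputable def rej {M N : ℕ} (A : Matrix (Fin M) (Fin N) ℝ) (S : Finset (Fin M)) :
    Matrix (Fin N) (Fin N) ℝ :=
  if volSq A S = 0 then 1 else 1 - (volSq A S)⁻¹ • quasiProj A S

/-! ### Auxiliary lemmas -/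

lemma normSq_eq_dot {N : ℕ} (x : Fin N → ℝ) : normSq x = x ⬝ᵥ x := by
  simp [normSq, dotProduct, sq]

lemma normSq_nonneg {N : ℕ} (x : Fin N → ℝ) : 0 ≤ normSq x :=
  Finset.sum_nonneg fun i _ => sq_nonneg _

lemma volSq_nonneg {M N : ℕ} (A : Matrix (Fin M) (Fin N) ℝ) (S : Finset (Fin M)) :
    0 ≤ volSq A S := by
  have h : (subMat A S * (subMat A S)ᴴ).PosSemidef :=
    posSemidef_self_mul_conjTranspose _
  have hT : (subMat A S)ᴴ = (subMat A S)ᵀ := conjTranspose_eq_transpose_of_trivial _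
  rw [hT] at h
  rw [volSq]
  exact h.det_nonneg

lemma quasiProj_eq_zero {M N : ℕ} (A : Matrix (Fin M) (Fin N) ℝ) (S : Finset (Fin M))
    (h : volSq A S = 0) : quasiProj A S = 0 := by
  set B := subMat A S
  have hT : Bᴴ = Bᵀ := conjTranspose_eq_transpose_of_trivial _
  have key : (B * Bᵀ).adjugate * B = 0 := by
    refine (Matrix.mul_self_mul_conjTranspose_eq_zero B ((B * Bᵀ).adjugate)).mp ?_
    rw [hT, Matrix.adjugate_mul]
    have hdet : (B * Bᵀ).det = 0 := h
    rw [hdet, zero_smul]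
  rw [quasiProj, Matrix.mul_assoc, key, Matrix.mul_zero]

lemma quasiProj_transpose {M N : ℕ} (A : Matrix (Fin M) (Fin N) ℝ) (S : Finset (Fin M)) :
    (quasiProj A S)ᵀ = quasiProj A S := by
  rw [quasiProj, Matrix.transpose_mul, Matrix.transpose_mul, Matrix.transpose_transpose,
    Matrix.adjugate_transpose, Matrix.transpose_mul, Matrix.transpose_transpose,
    Matrix.mul_assoc]

lemma quasiProj_mul_self {M N : ℕ} (A : Matrix (Fin M) (Fin N) ℝ) (S : Finset (Fin M)) :
    quasiProj A S * quasiProj A S = volSq A S • quasiProj A S := by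
  simp only [quasiProj, volSq, Matrix.mul_assoc]
  rw [← Matrix.mul_assoc (subMat A S) (subMat A S)ᵀ,
    ← Matrix.mul_assoc (subMat A S * (subMat A S)ᵀ), Matrix.mul_adjugate,
    Matrix.smul_mul, Matrix.one_mul, Matrix.mul_smul, Matrix.mul_smul]

lemma dot_mulVec_self {N : ℕ} (P : Matrix (Fin N) (Fin N) ℝ) (e : Fin N → ℝ) :
    (P *ᵥ e) ⬝ᵥ (P *ᵥ e) = e ⬝ᵥ ((Pᵀ * P) *ᵥ e) := by
  rw [← Matrix.mulVec_mulVec, Matrix.dotProduct_mulVec e Pᵀ, Matrix.vecMul_transpose]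

lemma rej_proj {M N : ℕ} (A : Matrix (Fin M) (Fin N) ℝ) (S : Finset (Fin M))
    (h : volSq A S ≠ 0) : (rej A S)ᵀ * rej A S = rej A S := by
  rw [rej, if_neg h]
  rw [Matrix.transpose_sub, Matrix.transpose_one, Matrix.transpose_smul, quasiProj_transpose]
  simp only [Matrix.sub_mul, Matrix.mul_sub, Matrix.one_mul, Matrix.mul_one,
    Matrix.smul_mul, Matrix.mul_smul, quasiProj_mul_self, smul_smul]
  rw [inv_mul_cancel₀ h]
  simp

lemma rej_term {M N n : ℕ} (A : Matrix (Fin M) (Fin N) ℝ) (hvol : 0 < vol A n)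
    (S : Finset (Fin M)) (e : Fin N → ℝ) :
    volSq A S / vol A n * normSq (rej A S *ᵥ e)
      = (volSq A S * normSq e - e ⬝ᵥ (quasiProj A S *ᵥ e)) / vol A n := by
  by_cases h : volSq A S = 0
  · simp [h, quasiProj_eq_zero A S h]
  · have hR : normSq (rej A S *ᵥ e)
        = normSq e - (volSq A S)⁻¹ * (e ⬝ᵥ (quasiProj A S *ᵥ e)) := by
      rw [normSq_eq_dot, dot_mulVec_self, rej_proj A S h, rej, if_neg h,
        Matrix.sub_mulVec, Matrix.one_mulVec, dotProduct_sub, Matrix.smul_mulVec,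
        dotProduct_smul, normSq_eq_dot, smul_eq_mul]
    rw [hR]
    field_simp

lemma sum_mulVec' {N : ℕ} {ι : Type*} (s : Finset ι) (f : ι → Matrix (Fin N) (Fin N) ℝ)
    (x : Fin N → ℝ) : (∑ i ∈ s, f i) *ᵥ x = ∑ i ∈ s, f i *ᵥ x := by
  induction s using Finset.cons_induction with
  | empty => simp [Matrix.zero_mulVec]
  | cons a s ha ih => simp [Finset.sum_cons, Matrix.add_mulVec, ih]

lemma dotProduct_sum' {N : ℕ} {ι : Type*} (s : Finset ι) (e : Fin N → ℝ)
    (f : ι → (Fin N → ℝ)) : e ⬝ᵥ (∑ i ∈ s, f i) = ∑ i ∈ s, e ⬝ᵥ f i := by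
  induction s using Finset.cons_induction with
  | empty => simp
  | cons a s ha ih => simp [Finset.sum_cons, dotProduct_add, ih]

/-- One-step expected contraction. -/
lemma step_contraction {M N n : ℕ} (A : Matrix (Fin M) (Fin N) ℝ) (hvol : 0 < vol A n)
    (μ : ℝ) (hμ : ∀ x : Fin N → ℝ, μ * normSq x ≤ x ⬝ᵥ (totalQuasiProj A n *ᵥ x))
    (e : Fin N → ℝ) :
    ∑ S ∈ Finset.univ.powersetCard n, volSq A S / vol A n * normSq (rej A S *ᵥ e)
      ≤ (1 - μ / vol A n) * normSq e := by
  have hvol' : vol A n ≠ 0 := ne_of_gt hvol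
  have h1 : ∑ S ∈ Finset.univ.powersetCard n, volSq A S / vol A n * normSq (rej A S *ᵥ e)
      = (vol A n * normSq e - e ⬝ᵥ (totalQuasiProj A n *ᵥ e)) / vol A n := by
    rw [Finset.sum_congr rfl fun S _ => rej_term A hvol S e, ← Finset.sum_div]
    congr 1
    rw [Finset.sum_sub_distrib, ← Finset.sum_mul, totalQuasiProj, sum_mulVec',
      dotProduct_sum', vol]
  rw [h1]
  have h2 : (vol A n * normSq e - e ⬝ᵥ (totalQuasiProj A n *ᵥ e)) / vol A n
      ≤ (vol A n * normSq e - μ * normSq e) / vol A n := by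
    gcongr
    exact hμ e
  have h3 : (vol A n * normSq e - μ * normSq e) / vol A n = (1 - μ / vol A n) * normSq e := by
    field_simp
  exact h2.trans (le_of_eq h3)

lemma sum_piFinset_cons {α β : Type*} [DecidableEq α] (s : Finset α) (k : ℕ)
    [AddCommMonoid β] (f : (Fin (k + 1) → α) → β) :
    ∑ T ∈ Fintype.piFinset (fun _ : Fin (k + 1) => s), f T
      = ∑ a ∈ s, ∑ T ∈ Fintype.piFinset (fun _ : Fin k => s), f (Fin.cons a T) := by
  rw [← Finset.sum_product']
  refine Finset.sum_nbij' (fun T => (T 0, Fin.tail T)) (fun p => Fin.cons p.1 p.2)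
    ?_ ?_ ?_ ?_ ?_
  · intro T hT
    simp only [Fintype.mem_piFinset] at hT
    simp only [Finset.mem_product, Fintype.mem_piFinset]
    exact ⟨hT 0, fun j => hT j.succ⟩
  · intro p hp
    simp only [Finset.mem_product, Fintype.mem_piFinset] at hp ⊢
    intro i
    refine Fin.cases ?_ (fun j => ?_) i
    · simpa using hp.1
    · simpa using hp.2 j
  · intro T _
    exact Fin.cons_self_tail T
  · intro p _
    simp [Fin.tail_cons]
  · intro T _
    rw [Fin.cons_self_tail]

/-- Expected exponential convergence: if `vol_n > 0` and `0 ≤ μ ≤ vol_n` is a lower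
bound on the quadratic form of `Φ_n`, then after `k` independent volume-sampled steps
of the `n`-row pursuit the expected squared error satisfies
`Σ_{(S_1,…,S_k)} (Π_j v_{S_j}²/vol_n) ‖R_{S_k} ⋯ R_{S_1} e₀‖² ≤ (1 − μ/vol_n)^k ‖e₀‖²`. -/
theorem expected_exponential_convergence {M N n : ℕ}
    (A : Matrix (Fin M) (Fin N) ℝ) (hvol : 0 < vol A n) (μ : ℝ)
    (hμ0 : 0 ≤ μ) (hμvol : μ ≤ vol A n)
    (hμ : ∀ x : Fin N → ℝ, μ * normSq x ≤ x ⬝ᵥ (totalQuasiProj A n *ᵥ x))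
    (e₀ : Fin N → ℝ) (k : ℕ) :
    ∑ T ∈ Fintype.piFinset (fun _ : Fin k => Finset.univ.powersetCard n),
        (∏ j, volSq A (T j) / vol A n) *
          normSq ((List.ofFn fun j => rej A (T j)).reverse.prod *ᵥ e₀) ≤
      (1 - μ / vol A n) ^ k * normSq e₀ := by
  induction k generalizing e₀ with
  | zero =>
      have huniv : Fintype.piFinset (fun _ : Fin 0 => Finset.univ.powersetCard n)
          = (Finset.univ : Finset (Fin 0 → Finset (Fin M))) :=
        Finset.eq_univ_of_forall fun T => by
          simp only [Fintype.mem_piFinset]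
          exact fun i => i.elim0
      rw [huniv, Finset.univ_unique, Finset.sum_singleton]
      simp
  | succ k ih =>
      rw [sum_piFinset_cons]
      have hstep : ∀ a ∈ Finset.univ.powersetCard n,
          ∑ T ∈ Fintype.piFinset (fun _ : Fin k => Finset.univ.powersetCard n),
            (∏ j : Fin (k + 1), volSq A (Fin.cons (α := fun _ => Finset (Fin M)) a T j) / vol A n) *
              normSq ((List.ofFn fun j : Fin (k + 1) =>
                rej A (Fin.cons (α := fun _ => Finset (Fin M)) a T j)).reverse.prod *ᵥ e₀)
          ≤ volSq A a / vol A n * ((1 - μ / vol A n) ^ k * normSq (rej A a *ᵥ e₀)) := by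
        intro a _
        have hsimp : ∀ T : Fin k → Finset (Fin M),
            (∏ j : Fin (k + 1), volSq A (Fin.cons (α := fun _ => Finset (Fin M)) a T j) / vol A n) *
              normSq ((List.ofFn fun j : Fin (k + 1) =>
                rej A (Fin.cons (α := fun _ => Finset (Fin M)) a T j)).reverse.prod *ᵥ e₀)
            = volSq A a / vol A n *
              ((∏ j, volSq A (T j) / vol A n) *
                normSq ((List.ofFn fun j => rej A (T j)).reverse.prod *ᵥ (rej A a *ᵥ e₀))) := by
          intro T
          have hp : (∏ j : Fin (k + 1), volSq A (Fin.cons (α := fun _ => Finset (Fin M)) a T j) / vol A n)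
              = volSq A a / vol A n * ∏ j, volSq A (T j) / vol A n := by
            have : (fun j : Fin (k + 1) => volSq A (Fin.cons (α := fun _ => Finset (Fin M)) a T j) / vol A n)
                = Fin.cons (volSq A a / vol A n) (fun j => volSq A (T j) / vol A n) := by
              funext j
              refine Fin.cases ?_ (fun i => ?_) j <;> simp
            rw [this, Fin.prod_cons]
          have hl : (List.ofFn fun j : Fin (k + 1) => rej A (Fin.cons (α := fun _ => Finset (Fin M)) a T j)).reverse.prod *ᵥ e₀
              = (List.ofFn fun j => rej A (T j)).reverse.prod *ᵥ (rej A a *ᵥ e₀) := by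
            rw [List.ofFn_succ]
            simp only [Fin.cons_zero, Fin.cons_succ, List.reverse_cons, List.prod_append,
              List.prod_cons, List.prod_nil, Matrix.mul_one, ← Matrix.mulVec_mulVec]
          rw [hp, hl]
          ring
        rw [Finset.sum_congr rfl fun T _ => hsimp T, ← Finset.mul_sum]
        have hw : 0 ≤ volSq A a / vol A n := div_nonneg (volSq_nonneg A a) hvol.le
        exact mul_le_mul_of_nonneg_left (ih (rej A a *ᵥ e₀)) hw
      calc ∑ a ∈ Finset.univ.powersetCard n,
            ∑ T ∈ Fintype.piFinset (fun _ : Fin k => Finset.univ.powersetCard n),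
              (∏ j : Fin (k + 1), volSq A (Fin.cons (α := fun _ => Finset (Fin M)) a T j) / vol A n) *
                normSq ((List.ofFn fun j : Fin (k + 1) =>
                  rej A (Fin.cons (α := fun _ => Finset (Fin M)) a T j)).reverse.prod *ᵥ e₀)
          ≤ ∑ a ∈ Finset.univ.powersetCard n,
              volSq A a / vol A n * ((1 - μ / vol A n) ^ k * normSq (rej A a *ᵥ e₀)) :=
            Finset.sum_le_sum hstep
        _ = (1 - μ / vol A n) ^ k *
              ∑ a ∈ Finset.univ.powersetCard n, volSq A a / vol A n * normSq (rej A a *ᵥ e₀) := by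
            rw [Finset.mul_sum]
            exact Finset.sum_congr rfl fun a _ => by ring
        _ ≤ (1 - μ / vol A n) ^ k * ((1 - μ / vol A n) * normSq e₀) := by
            have hpow : 0 ≤ (1 - μ / vol A n) ^ k :=
              pow_nonneg (by rw [sub_nonneg]; exact (div_le_one hvol).mpr hμvol) k
            exact mul_le_mul_of_nonneg_left (step_contraction A hvol μ hμ e₀) hpow
        _ = (1 - μ / vol A n) ^ (k + 1) * normSq e₀ := by ring
end
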